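/- Let Z > 0, W₂ > 0, W₃ > 0, M > 0 and Γ > 0. Then ∫₀^M Z e^{−Z x} ( ∫₀^Γ W₂ e^{−W₂ z} (1 − e^{−W₃ (Γ − z)/x}) dz ) dx = (1 − e^{−Z M})(1 − e^{−W₂ Γ}) + Z·W₂·∫₀^M x e^{−Z x} (e^{−W₂ Γ} − e^{−W₃ Γ/x})/(x W₂ − W₃) dx. (At the single point x = W₃/W₂, if it lies in (0,M), the integrand of the last integral has a removable singularity; since this is a set of measure zero it does not affect the Lebesgue integrals.) -/

import Mathlib

open Real MeasureTheory

/-- Appendix D computation of `P{B·Ψ + γ_SD < Γ, B < M}` for the incremental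
best-effort policy.  (The possible singularity of the last integrand at
`x = W₃/W₂` is a removable one on a measure-zero set.) -/

lemma lip (p q : ℝ) (hp : p ≤ 0) (hq : q ≤ 0) : |exp p - exp q| ≤ |p - q| := by
  wlog h : q ≤ p generalizing p q
  · rw [abs_sub_comm, abs_sub_comm p q]; exact this q p hq hp (le_of_not_ge h)
  rw [abs_of_nonneg (by simp [exp_le_exp]; linarith), abs_of_nonneg (by linarith)]
  have h1 : exp p - exp q = exp p * (1 - exp (q - p)) := by
    rw [mul_sub, ← exp_add]; ring_nf
  rw [h1]
  have h2 : exp p ≤ 1 := exp_le_one_iff.mpr hp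
  have h3 : exp (q - p) ≤ 1 := exp_le_one_iff.mpr (by linarith)
  nlinarith [Real.add_one_le_exp (q - p), Real.exp_pos p]

lemma inner_eq (W2 W3 Γ x : ℝ) (hW2 : 0 < W2) (hW3 : 0 < W3) (hx : 0 < x)
    (hne : x * W2 - W3 ≠ 0) :
    ∫ z in (0:ℝ)..Γ, W2 * exp (-W2 * z) * (1 - exp (-W3 * (Γ - z) / x)) =
      (1 - exp (-W2 * Γ)) + W2 * (x * (exp (-W2 * Γ) - exp (-W3 * Γ / x)) / (x * W2 - W3)) := by
  have hx0 : x ≠ 0 := ne_of_gt hx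
  set c : ℝ := W3 / x with hc
  have hcW : c - W2 ≠ 0 := by
    rw [hc]; intro h
    apply hne
    have h2 : W3 / x = W2 := by linarith [sub_eq_zero.mp h]
    field_simp at h2; linarith
  set F : ℝ → ℝ := fun z => -exp (-W2 * z) - W2 * exp (-c * Γ) * exp ((c - W2) * z) / (c - W2) with hF
  have hderiv : ∀ z ∈ Set.uIcc (0:ℝ) Γ, HasDerivAt F
      (W2 * exp (-W2 * z) * (1 - exp (-W3 * (Γ - z) / x))) z := by
    intro z _
    have h1 : HasDerivAt (fun z : ℝ => -exp (-W2 * z)) (-(exp (-W2 * z) * (-W2 * 1))) z :=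
      (((hasDerivAt_id z).const_mul (-W2)).exp).neg
    have h2 : HasDerivAt (fun z : ℝ => W2 * exp (-c * Γ) * exp ((c - W2) * z) / (c - W2))
        (W2 * exp (-c * Γ) * (exp ((c - W2) * z) * ((c - W2) * 1)) / (c - W2)) z :=
      ((((hasDerivAt_id z).const_mul (c - W2)).exp).const_mul (W2 * exp (-c * Γ))).div_const _
    have h3 := h1.sub h2
    refine h3.congr_deriv (Eq.symm ?_)
    have e1 : exp (-W3 * (Γ - z) / x) = exp (-c * Γ + c * z) := by
      congr 1; rw [hc]; field_simp; ring
    have e4 : W2 * exp (-c * Γ) * (exp ((c - W2) * z) * ((c - W2) * 1)) / (c - W2)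
        = W2 * exp (-c * Γ) * exp ((c - W2) * z) := by
      field_simp
    have e5 : exp (-W2 * z) * exp (-c * Γ + c * z) = exp (-c * Γ) * exp ((c - W2) * z) := by
      rw [← exp_add, ← exp_add]; ring_nf
    rw [e1, e4]
    linear_combination (-W2) * e5
  have hcont : IntervalIntegrable (fun z => W2 * exp (-W2 * z) * (1 - exp (-W3 * (Γ - z) / x)))
      volume 0 Γ := by
    apply Continuous.intervalIntegrable; fun_prop
  rw [intervalIntegral.integral_eq_sub_of_hasDerivAt hderiv hcont]
  have e2 : exp (-(c * Γ)) * exp ((c - W2) * Γ) = exp (-(W2 * Γ)) := by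
    rw [← exp_add]; ring_nf
  have e3 : exp (-(W3 * Γ) / x) = exp (-(c * Γ)) := by congr 1; rw [hc]; field_simp
  rw [hF]
  simp only [mul_zero, exp_zero, mul_one, neg_mul, neg_zero]
  rw [e3, mul_assoc W2, e2]
  have hcx : c * x = W3 := by rw [hc]; field_simp
  have hxx : x * x⁻¹ = 1 := mul_inv_cancel₀ hx0
  have hne' : W2 * x - W3 ≠ 0 := by intro h; apply hne; linarith
  field_simp
  rw [mul_comm Γ c]
  field_simp
  rw [hc]
  field_simp
  ring


theorem stmt10 (Z W2 W3 M Γ : ℝ) (hZ : 0 < Z) (hW2 : 0 < W2) (hW3 : 0 < W3)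
    (hM : 0 < M) (hΓ : 0 < Γ) :
    (∫ x in (0:ℝ)..M, Z * Real.exp (-Z * x) *
        ∫ z in (0:ℝ)..Γ, W2 * Real.exp (-W2 * z) * (1 - Real.exp (-W3 * (Γ - z) / x)))
      = (1 - Real.exp (-Z * M)) * (1 - Real.exp (-W2 * Γ))
        + Z * W2 * ∫ x in (0:ℝ)..M,
            x * Real.exp (-Z * x) * (Real.exp (-W2 * Γ) - Real.exp (-W3 * Γ / x))
              / (x * W2 - W3) := by
  set g : ℝ → ℝ := fun x =>
    x * Real.exp (-Z * x) * (Real.exp (-W2 * Γ) - Real.exp (-W3 * Γ / x)) / (x * W2 - W3)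
    with hg
  set a : ℝ → ℝ := fun x => Z * Real.exp (-Z * x) * (1 - Real.exp (-W2 * Γ)) with ha
  -- a.e. rewriting of the integrand
  have h1 : ∀ᵐ x : ℝ, x ∉ ({W3 / W2} : Set ℝ) :=
    MeasureTheory.measure_eq_zero_iff_ae_notMem.mp (measure_singleton _)
  have hae : ∀ᵐ x : ℝ, x ∈ Set.uIoc (0:ℝ) M →
      Z * Real.exp (-Z * x) *
        (∫ z in (0:ℝ)..Γ, W2 * Real.exp (-W2 * z) * (1 - Real.exp (-W3 * (Γ - z) / x)))
        = a x + Z * W2 * g x := by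
    filter_upwards [h1] with x hx hmem
    rw [Set.mem_singleton_iff] at hx
    rw [Set.uIoc_of_le hM.le] at hmem
    have hxpos : 0 < x := hmem.1
    have hne : x * W2 - W3 ≠ 0 := by
      intro h
      apply hx
      field_simp
      linarith
    rw [inner_eq W2 W3 Γ x hW2 hW3 hxpos hne, hg, ha]
    ring
  rw [intervalIntegral.integral_congr_ae hae]
  -- integrability
  have hga : IntervalIntegrable a volume 0 M := by
    apply Continuous.intervalIntegrable; fun_prop
  have hgg : IntervalIntegrable g volume 0 M := by
    rw [intervalIntegrable_iff]
    have hmeas : AEStronglyMeasurable g (volume.restrict (Set.uIoc (0:ℝ) M)) := by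
      apply Measurable.aestronglyMeasurable
      rw [hg]
      fun_prop
    have hC : IntegrableOn (fun _ : ℝ => Γ) (Set.uIoc (0:ℝ) M) volume :=
      (integrableOn_const_iff (by simp)).mpr (Or.inr (by rw [Set.uIoc_of_le hM.le]; exact measure_Ioc_lt_top))
    apply Integrable.mono' hC hmeas
    rw [ae_restrict_iff' measurableSet_uIoc]
    filter_upwards with x hmem
    rw [Set.uIoc_of_le hM.le] at hmem
    have hxpos : 0 < x := hmem.1
    by_cases hd : x * W2 - W3 = 0
    · rw [hg]; simp only [hd, div_zero, norm_zero]; exact hΓ.le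
    · have hDpos : 0 < |x * W2 - W3| := abs_pos.mpr hd
      have hnum : |Real.exp (-W2 * Γ) - Real.exp (-W3 * Γ / x)| ≤ Γ * |x * W2 - W3| / x := by
        have hle := lip (-W2 * Γ) (-W3 * Γ / x)
          (by nlinarith) (by rw [div_nonpos_iff]; right; constructor <;> nlinarith)
        refine hle.trans (le_of_eq ?_)
        rw [show (-W2 * Γ) - (-W3 * Γ / x) = (-Γ) * (x * W2 - W3) / x by
          field_simp; ring]
        rw [abs_div, abs_mul, abs_neg, abs_of_pos hΓ, abs_of_pos hxpos]
      have hE1 : Real.exp (-Z * x) ≤ 1 := exp_le_one_iff.mpr (by nlinarith)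
      have hE0 : 0 < Real.exp (-Z * x) := exp_pos _
      rw [hg]
      simp only [Real.norm_eq_abs]
      rw [abs_div, abs_mul, abs_mul, abs_of_pos hxpos, abs_of_pos hE0]
      rw [div_le_iff₀ hDpos]
      have hnum' : |Real.exp (-W2 * Γ) - Real.exp (-W3 * Γ / x)| * x ≤ Γ * |x * W2 - W3| := by
        rw [← le_div_iff₀ hxpos]; exact hnum
      calc x * Real.exp (-Z * x) * |Real.exp (-W2 * Γ) - Real.exp (-W3 * Γ / x)|
          ≤ x * 1 * |Real.exp (-W2 * Γ) - Real.exp (-W3 * Γ / x)| := by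
            nlinarith [mul_nonneg (mul_nonneg hxpos.le (sub_nonneg.mpr hE1))
              (abs_nonneg (Real.exp (-W2 * Γ) - Real.exp (-W3 * Γ / x)))]
        _ = |Real.exp (-W2 * Γ) - Real.exp (-W3 * Γ / x)| * x := by ring
        _ ≤ Γ * |x * W2 - W3| := hnum'
  rw [intervalIntegral.integral_add hga (hgg.const_mul (Z * W2)),
    intervalIntegral.integral_const_mul]
  congr 1
  -- ∫ a
  have hZanti : ∀ x ∈ Set.uIcc (0:ℝ) M,
      HasDerivAt (fun x : ℝ => -Real.exp (-Z * x)) (Z * Real.exp (-Z * x)) x := by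
    intro x _
    have := (((hasDerivAt_id x).const_mul (-Z)).exp).neg
    refine this.congr_deriv (Eq.symm ?_)
    simp; ring
  have hZc : IntervalIntegrable (fun x : ℝ => Z * Real.exp (-Z * x)) volume 0 M := by
    apply Continuous.intervalIntegrable; fun_prop
  rw [ha]
  rw [intervalIntegral.integral_mul_const,
    intervalIntegral.integral_eq_sub_of_hasDerivAt hZanti hZc]
  simp only [mul_zero, neg_zero, exp_zero]
  ring
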